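/- For all natural numbers s ≥ 1, q ≥ 0, and all x: F_s(x) · Σ_{n=0}^{q} (-1)^{s(n+q)} L_{2sn}(x) = L_{sq}(x) · F_{s(q+1)}(x). -/

import Mathlib

/-- Fibonacci polynomials evaluated at a real `x`. -/
def fibP : ℕ → ℝ → ℝ
  | 0, _ => 0
  | 1, _ => 1
  | n + 2, x => x * fibP (n + 1) x + fibP n x

/-- Lucas polynomials evaluated at a real `x`. -/
def lucasP : ℕ → ℝ → ℝ
  | 0, _ => 2
  | 1, x => x
  | n + 2, x => x * lucasP (n + 1) x + lucasP n x

lemma fibP_add2 (n : ℕ) (x : ℝ) : fibP (n+2) x = x * fibP (n+1) x + fibP n x := rfl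
lemma lucasP_add2 (n : ℕ) (x : ℝ) : lucasP (n+2) x = x * lucasP (n+1) x + lucasP n x := rfl

lemma lucas_fib (x : ℝ) : ∀ b, lucasP (b+1) x = fibP (b+2) x + fibP b x
  | 0 => by simp [lucasP, fibP]
  | 1 => by simp [lucasP, fibP]; ring
  | (b+2) => by
    have h1 : lucasP (b+1) x = fibP (b+2) x + fibP b x := lucas_fib x b
    have h2 : lucasP (b+2) x = fibP (b+3) x + fibP (b+1) x := lucas_fib x (b+1)
    have e1 : lucasP (b+3) x = x * lucasP (b+2) x + lucasP (b+1) x := lucasP_add2 (b+1) x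
    have e4 : fibP (b+4) x = x * fibP (b+3) x + fibP (b+2) x := fibP_add2 (b+2) x
    have e5 : fibP (b+2) x = x * fibP (b+1) x + fibP b x := fibP_add2 b x
    show lucasP (b+3) x = fibP (b+4) x + fibP (b+2) x
    linear_combination e1 + x*h2 + h1 - e4 - e5

lemma fib_add (x : ℝ) (m : ℕ) :
    ∀ n, fibP (m+n+1) x = fibP (m+1) x * fibP (n+1) x + fibP m x * fibP n x
  | 0 => by simp [fibP]
  | 1 => by
    have e : fibP (m+2) x = x * fibP (m+1) x + fibP m x := fibP_add2 m x
    show fibP (m+2) x = fibP (m+1) x * fibP 2 x + fibP m x * fibP 1 x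
    simp [fibP] at e ⊢
    linear_combination e
  | (n+2) => by
    have h1 := fib_add x m n
    have h2 : fibP (m+n+2) x = fibP (m+1) x * fibP (n+2) x + fibP m x * fibP (n+1) x :=
      fib_add x m (n+1)
    have e1 : fibP (m+n+3) x = x * fibP (m+n+2) x + fibP (m+n+1) x := fibP_add2 (m+n+1) x
    have e2 : fibP (n+3) x = x * fibP (n+2) x + fibP (n+1) x := fibP_add2 (n+1) x
    have e3 : fibP (n+2) x = x * fibP (n+1) x + fibP n x := fibP_add2 n x
    show fibP (m+n+3) x = fibP (m+1) x * fibP (n+3) x + fibP m x * fibP (n+2) x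
    linear_combination e1 + x*h2 + h1 - fibP (m+1) x * e2 - fibP m x * e3

lemma docagne (x : ℝ) (a : ℕ) : ∀ b,
    fibP (a+b) x * fibP (b+1) x - fibP (a+b+1) x * fibP b x = (-1)^b * fibP a x
  | 0 => by simp [fibP]
  | (b+1) => by
    have h := docagne x a b
    have e1 : fibP (a+b+2) x = x * fibP (a+b+1) x + fibP (a+b) x := fibP_add2 (a+b) x
    have e2 : fibP (b+2) x = x * fibP (b+1) x + fibP b x := fibP_add2 b x
    show fibP (a+b+1) x * fibP (b+2) x - fibP (a+b+2) x * fibP (b+1) x = (-1)^(b+1) * fibP a x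
    rw [pow_succ]
    linear_combination fibP (a+b+1) x * e2 - fibP (b+1) x * e1 - h

lemma lemA (x : ℝ) (a b : ℕ) :
    fibP (a+b) x * lucasP b x = fibP (a+2*b) x + (-1)^b * fibP a x := by
  cases b with
  | zero => simp [lucasP]; ring
  | succ b =>
    rw [lucas_fib x b]
    have hadd := fib_add x (a+b) (b+1)
    rw [show a+b+(b+1)+1 = a+2*(b+1) by ring] at hadd
    have hd := docagne x a b
    rw [hadd, show a+(b+1) = a+b+1 by ring, pow_succ]
    linear_combination -hd

lemma lemB (x : ℝ) (a b : ℕ) :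
    fibP b x * lucasP (a+b) x = fibP (a+2*b) x - (-1)^b * fibP a x := by
  cases b with
  | zero => simp [fibP]
  | succ b =>
    rw [show a+(b+1) = (a+b)+1 by ring, lucas_fib x (a+b)]
    have hadd := fib_add x b (a+b+1)
    rw [show b+(a+b+1)+1 = a+2*(b+1) by ring] at hadd
    have hd := docagne x a b
    rw [hadd, pow_succ]
    linear_combination hd

theorem stmt_10 (s q : ℕ) (hs : 1 ≤ s) (x : ℝ) :
    fibP s x * ∑ n ∈ Finset.range (q + 1), (-1 : ℝ) ^ (s * (n + q)) * lucasP (2 * s * n) x =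
      lucasP (s * q) x * fibP (s * (q + 1)) x := by
  induction q with
  | zero => simp [lucasP, fibP]; ring
  | succ q ih =>
    have hsum : ∑ n ∈ Finset.range (q+1+1), (-1:ℝ)^(s*(n+(q+1))) * lucasP (2*s*n) x
        = (-1:ℝ)^s * ∑ n ∈ Finset.range (q+1), (-1:ℝ)^(s*(n+q)) * lucasP (2*s*n) x
          + lucasP (2*s*q+2*s) x := by
      rw [Finset.sum_range_succ, Finset.mul_sum]
      congr 1
      · exact Finset.sum_congr rfl fun n _ => by
          rw [show s*(n+(q+1)) = s + s*(n+q) by ring, pow_add]; ring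
      · rw [show s*(q+1+(q+1)) = 2*(s*(q+1)) by ring, pow_mul,
          show 2*s*(q+1) = 2*s*q+2*s by ring]
        simp
    rw [hsum]
    rw [show s*(q+1) = s*q+s by ring] at ih
    have hA1 := lemA x s (s*q)
    rw [show s+s*q = s*q+s by ring, show s+2*(s*q) = 2*s*q+s by ring] at hA1
    have hB := lemB x (2*s*q+s) s
    rw [show 2*s*q+s+s = 2*s*q+2*s by ring, show 2*s*q+s+2*s = 2*s*q+3*s by ring] at hB
    have hA2 := lemA x s (s*q+s)
    rw [show s+(s*q+s) = s*q+2*s by ring, show s+2*(s*q+s) = 2*s*q+3*s by ring,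
      pow_add] at hA2
    rw [show s*(q+1+1) = s*q+2*s by ring, show s*(q+1) = s*q+s by ring]
    linear_combination (-1:ℝ)^s * ih + hB + (-1:ℝ)^s * hA1 - hA2
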